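/- With the same setup as the interval observer for discrete-time LTI systems, defining x̄_k = (T^{-1})⊕ z̄_k − (T^{-1})⊖ z̲_k and x̲_k = (T^{-1})⊕ z̲_k − (T^{-1})⊖ z̄_k, one has x̲_k ≤ x_k ≤ x̄_k componentwise for all k ∈ ℕ. -/
import Mathlib


def matPos {m n : ℕ} (A : Matrix (Fin m) (Fin n) ℝ) : Matrix (Fin m) (Fin n) ℝ :=
  fun i j => max 0 (A i j)

def matNeg {m n : ℕ} (A : Matrix (Fin m) (Fin n) ℝ) : Matrix (Fin m) (Fin n) ℝ :=
  matPos A - A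

lemma matPos_nonneg {m n : ℕ} (A : Matrix (Fin m) (Fin n) ℝ) (i j) : 0 ≤ matPos A i j :=
  le_max_left _ _

lemma matNeg_nonneg {m n : ℕ} (A : Matrix (Fin m) (Fin n) ℝ) (i j) : 0 ≤ matNeg A i j := by
  simp [matNeg, matPos, Matrix.sub_apply]

lemma matPos_sub_matNeg {m n : ℕ} (A : Matrix (Fin m) (Fin n) ℝ) :
    matPos A - matNeg A = A := by simp [matNeg]

lemma mulVec_mono {m n : ℕ} {M : Matrix (Fin m) (Fin n) ℝ}
    (hM : ∀ i j, 0 ≤ M i j) {a b : Fin n → ℝ} (hab : a ≤ b) :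
    M.mulVec a ≤ M.mulVec b := by
  intro i
  simp only [Matrix.mulVec, dotProduct]
  apply Finset.sum_le_sum
  intro j _
  exact mul_le_mul_of_nonneg_left (hab j) (hM i j)

lemma mulVec_split {m n : ℕ} (M : Matrix (Fin m) (Fin n) ℝ) (v : Fin n → ℝ) :
    M.mulVec v = (matPos M).mulVec v - (matNeg M).mulVec v := by
  rw [← Matrix.sub_mulVec, matPos_sub_matNeg]

lemma sandwich_upper {m n : ℕ} (M : Matrix (Fin m) (Fin n) ℝ)
    {a v b : Fin n → ℝ} (ha : a ≤ v) (hb : v ≤ b) :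
    M.mulVec v ≤ (matPos M).mulVec b - (matNeg M).mulVec a := by
  rw [mulVec_split M v]
  exact sub_le_sub (mulVec_mono (matPos_nonneg M) hb) (mulVec_mono (matNeg_nonneg M) ha)

lemma sandwich_lower {m n : ℕ} (M : Matrix (Fin m) (Fin n) ℝ)
    {a v b : Fin n → ℝ} (ha : a ≤ v) (hb : v ≤ b) :
    (matPos M).mulVec a - (matNeg M).mulVec b ≤ M.mulVec v := by
  rw [mulVec_split M v]
  exact sub_le_sub (mulVec_mono (matPos_nonneg M) ha) (mulVec_mono (matNeg_nonneg M) hb)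

theorem interval_observer_soundness_x {n p q r : ℕ}
    (F A T : Matrix (Fin n) (Fin n) ℝ) (H : Matrix (Fin p) (Fin n) ℝ)
    (D : Matrix (Fin n) (Fin q) ℝ) (W : Matrix (Fin p) (Fin r) ℝ)
    (B : Matrix (Fin n) (Fin p) ℝ)
    (hA : ∀ i j, 0 ≤ A i j) (hTinv : IsUnit T.det)
    (hSyl : T * F = A * T + B * H)
    (x u : ℕ → Fin n → ℝ) (y : ℕ → Fin p → ℝ)
    (d dbar dlow : ℕ → Fin q → ℝ) (w wbar wlow : ℕ → Fin r → ℝ)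
    (zbar zlow : ℕ → Fin n → ℝ) (xbar0 xlow0 : Fin n → ℝ)
    (hx : ∀ k, x (k + 1) = F.mulVec (x k) + u k + D.mulVec (d k))
    (hy : ∀ k, y k = H.mulVec (x k) + W.mulVec (w k))
    (hd : ∀ k, dlow k ≤ d k ∧ d k ≤ dbar k)
    (hw : ∀ k, wlow k ≤ w k ∧ w k ≤ wbar k)
    (hx0 : xlow0 ≤ x 0 ∧ x 0 ≤ xbar0)
    (hz0 : zbar 0 = (matPos T).mulVec xbar0 - (matNeg T).mulVec xlow0 ∧
           zlow 0 = (matPos T).mulVec xlow0 - (matNeg T).mulVec xbar0)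
    (hzbar : ∀ k, zbar (k + 1) = A.mulVec (zbar k) + B.mulVec (y k) + T.mulVec (u k)
      + (matPos (T * D)).mulVec (dbar k) - (matNeg (T * D)).mulVec (dlow k)
      + (matNeg (B * W)).mulVec (wbar k) - (matPos (B * W)).mulVec (wlow k))
    (hzlow : ∀ k, zlow (k + 1) = A.mulVec (zlow k) + B.mulVec (y k) + T.mulVec (u k)
      + (matPos (T * D)).mulVec (dlow k) - (matNeg (T * D)).mulVec (dbar k)
      + (matNeg (B * W)).mulVec (wlow k) - (matPos (B * W)).mulVec (wbar k)) :
    ∀ k, (matPos T⁻¹).mulVec (zlow k) - (matNeg T⁻¹).mulVec (zbar k) ≤ x k ∧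
      x k ≤ (matPos T⁻¹).mulVec (zbar k) - (matNeg T⁻¹).mulVec (zlow k) := by
  have hz : ∀ k, zlow k ≤ T.mulVec (x k) ∧ T.mulVec (x k) ≤ zbar k := by
    intro k
    induction k with
    | zero =>
      exact ⟨hz0.2 ▸ sandwich_lower T hx0.1 hx0.2, hz0.1 ▸ sandwich_upper T hx0.1 hx0.2⟩
    | succ k ih =>
      have hBH : (B * H).mulVec (x k) = B.mulVec (y k) - (B * W).mulVec (w k) := by
        rw [hy k, Matrix.mulVec_add]
        simp only [Matrix.mulVec_mulVec]
        abel
      have hTx : T.mulVec (x (k + 1)) = A.mulVec (T.mulVec (x k)) + B.mulVec (y k)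
          + T.mulVec (u k) + (T * D).mulVec (d k) - (B * W).mulVec (w k) := by
        rw [hx k, Matrix.mulVec_add, Matrix.mulVec_add]
        simp only [Matrix.mulVec_mulVec]
        rw [hSyl, Matrix.add_mulVec, hBH]
        abel
      have h1u := mulVec_mono hA ih.2
      have h1l := mulVec_mono hA ih.1
      have h2u := sandwich_upper (T * D) (hd k).1 (hd k).2
      have h2l := sandwich_lower (T * D) (hd k).1 (hd k).2
      have hBWsplit : (B * W).mulVec (w k)
          = (matPos (B * W)).mulVec (w k) - (matNeg (B * W)).mulVec (w k) :=
        mulVec_split _ _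
      have h3u : -(B * W).mulVec (w k)
          ≤ (matNeg (B * W)).mulVec (wbar k) - (matPos (B * W)).mulVec (wlow k) := by
        rw [hBWsplit, neg_sub]
        exact sub_le_sub (mulVec_mono (matNeg_nonneg _) (hw k).2)
          (mulVec_mono (matPos_nonneg _) (hw k).1)
      have h3l : (matNeg (B * W)).mulVec (wlow k) - (matPos (B * W)).mulVec (wbar k)
          ≤ -(B * W).mulVec (w k) := by
        rw [hBWsplit, neg_sub]
        exact sub_le_sub (mulVec_mono (matNeg_nonneg _) (hw k).1)
          (mulVec_mono (matPos_nonneg _) (hw k).2)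
      constructor
      · rw [hzlow k, hTx]
        intro i
        have := h1l i; have := h2l i; have := h3l i
        simp only [Pi.add_apply, Pi.sub_apply, Pi.neg_apply] at *
        linarith
      · rw [hTx, hzbar k]
        intro i
        have := h1u i; have := h2u i; have := h3u i
        simp only [Pi.add_apply, Pi.sub_apply, Pi.neg_apply] at *
        linarith
  intro k
  have hxk : x k = T⁻¹.mulVec (T.mulVec (x k)) := by
    rw [Matrix.mulVec_mulVec, Matrix.nonsing_inv_mul T hTinv, Matrix.one_mulVec]
  exact ⟨hxk ▸ sandwich_lower T⁻¹ (hz k).1 (hz k).2,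
    hxk ▸ sandwich_upper T⁻¹ (hz k).1 (hz k).2⟩
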